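/- Let G be a connected stepwise irregular graph with n vertices and m edges. Then n − 1 ≤ m ≤ (n² − 1)/4. -/
import Mathlib


open SimpleGraph

noncomputable def deg {V : Type*} (G : SimpleGraph V) (v : V) : ℕ := (G.neighborSet v).ncard

/-- A graph is stepwise irregular if for every edge the endpoint degrees differ by exactly 1. -/
def SI {V : Type*} (G : SimpleGraph V) : Prop :=
  ∀ u v, G.Adj u v → |(deg G u : ℤ) - (deg G v : ℤ)| = 1

private lemma exists_parent {V : Type*} [Fintype V] (G : SimpleGraph V) (hconn : G.Connected)
    (r v : V) (hv : v ≠ r) : ∃ u, G.Adj u v ∧ G.dist r u + 1 = G.dist r v := by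
  classical
  have hd : 0 < G.dist r v := hconn.pos_dist_of_ne (Ne.symm hv)
  obtain ⟨q, hq⟩ := (hconn v r).exists_walk_length_eq_dist
  rw [SimpleGraph.dist_comm] at hq
  cases q with
  | nil => exact absurd rfl hv
  | @cons _ u _ h q' =>
    refine ⟨u, h.symm, ?_⟩
    have hql : q'.length + 1 = G.dist r v := by simpa using hq
    have h1 : G.dist r u ≤ q'.length := by simpa using G.dist_le q'.reverse
    have h2 : G.dist r v ≤ G.dist r u + 1 := by
      have htr := hconn.dist_triangle (u := r) (v := u) (w := v)
      have : G.dist u v ≤ 1 := by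
        have := G.dist_le (SimpleGraph.Walk.cons h.symm SimpleGraph.Walk.nil)
        simpa using this
      omega
    omega

private lemma si_parity {V : Type*} [Fintype V] {G : SimpleGraph V} (hSI : SI G)
    {u v : V} (h : G.Adj u v) : Even (deg G u) ↔ ¬ Even (deg G v) := by
  have := hSI u v h
  have hcase : (deg G u : ℤ) - deg G v = 1 ∨ (deg G u : ℤ) - deg G v = -1 :=
    abs_eq (by norm_num) |>.mp this
  have : deg G u = deg G v + 1 ∨ deg G v = deg G u + 1 := by omega
  rcases this with h' | h' <;> rw [h'] <;> simp [Nat.even_add_one]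

theorem stmt_17 {V : Type*} [Fintype V] (G : SimpleGraph V) (hSI : SI G)
    (hconn : G.Connected) :
    (Fintype.card V : ℤ) - 1 ≤ (G.edgeSet.ncard : ℤ) ∧
    4 * (G.edgeSet.ncard : ℤ) ≤ (Fintype.card V : ℤ) ^ 2 - 1 := by
  classical
  have hne : Nonempty V := hconn.nonempty
  obtain ⟨r⟩ := hne
  set n := Fintype.card V with hn
  have hn1 : 1 ≤ n := Fintype.card_pos_iff.mpr ⟨r⟩
  have hm : G.edgeSet.ncard = G.edgeFinset.card := by
    rw [Set.ncard_eq_toFinset_card', Set.toFinset_card, ← SimpleGraph.edgeFinset_card]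
  -- Lower bound
  have hlow : n - 1 ≤ G.edgeFinset.card := by
    have key : ∀ v : V, v ≠ r → ∃ u, G.Adj u v ∧ G.dist r u + 1 = G.dist r v :=
      exists_parent G hconn r
    choose p hp hd using key
    have hinj : ∀ v ∈ Finset.univ.erase r, ∀ w ∈ Finset.univ.erase r,
        (fun v => if h : v ≠ r then s(p v h, v) else s(v, v)) v =
        (fun v => if h : v ≠ r then s(p v h, v) else s(v, v)) w → v = w := by
      intro v hv w hw hvw
      have hv' : v ≠ r := Finset.ne_of_mem_erase hv
      have hw' : w ≠ r := Finset.ne_of_mem_erase hw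
      simp only [dif_pos hv', dif_pos hw', Sym2.eq_iff] at hvw
      rcases hvw with ⟨_, h2⟩ | ⟨h1, h2⟩
      · exact h2
      · exfalso
        have d1 := hd v hv'
        have d2 := hd w hw'
        rw [h1] at d1; rw [← h2] at d2
        omega
    have hmaps : ∀ v ∈ Finset.univ.erase r,
        (fun v => if h : v ≠ r then s(p v h, v) else s(v, v)) v ∈ G.edgeFinset := by
      intro v hv
      have hv' : v ≠ r := Finset.ne_of_mem_erase hv
      simp only [dif_pos hv', SimpleGraph.mem_edgeFinset, SimpleGraph.mem_edgeSet]
      exact hp v hv'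
    have := Finset.card_le_card_of_injOn _ hmaps hinj
    simpa [Finset.card_erase_of_mem, Finset.card_univ, hn] using this
  -- Upper bound
  set A : Finset V := Finset.univ.filter (fun v => Even (deg G v)) with hA
  set B : Finset V := Finset.univ.filter (fun v => ¬ Even (deg G v)) with hB
  have hAB : A.card + B.card = n := by
    rw [hA, hB, Finset.card_filter_add_card_filter_not, hn]
    exact Finset.card_univ
  set F : Finset (V × V) :=
    Finset.univ.filter (fun q : V × V => G.Adj q.1 q.2 ∧ Even (deg G q.1)) with hF
  have hFcard : F.card = G.edgeFinset.card := by
    apply Finset.card_bij (fun q _ => s(q.1, q.2))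
    · intro q hq
      simp only [hF, Finset.mem_filter] at hq
      exact SimpleGraph.mem_edgeFinset.mpr (G.mem_edgeSet.mpr hq.2.1)
    · intro q hq q' hq' hqq
      simp only [hF, Finset.mem_filter] at hq hq'
      rw [Sym2.eq_iff] at hqq
      rcases hqq with ⟨h1, h2⟩ | ⟨h1, h2⟩
      · exact Prod.ext h1 h2
      · exfalso
        have e1 := hq.2.2
        have e2 := hq'.2.2
        have := (si_parity hSI hq'.2.1).mp e2
        rw [← h1] at this
        exact this e1
    · intro e he
      rw [SimpleGraph.mem_edgeFinset] at he
      induction e with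
      | _ u v =>
        have hadj : G.Adj u v := he
        by_cases hu : Even (deg G u)
        · exact ⟨(u, v), by simp [hF, hadj, hu], rfl⟩
        · have hv : Even (deg G v) := by
            by_contra hv
            exact hu ((si_parity hSI hadj).mpr hv)
          exact ⟨(v, u), by simp [hF, hadj.symm, hv], Sym2.eq_swap⟩
  have hFsub : F ⊆ A ×ˢ B := by
    intro q hq
    simp only [hF, Finset.mem_filter] at hq
    simp only [Finset.mem_product, hA, hB, Finset.mem_filter, Finset.mem_univ, true_and]
    exact ⟨hq.2.2, ((si_parity hSI hq.2.1).mp hq.2.2)⟩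
  have hle : G.edgeFinset.card ≤ A.card * B.card := by
    rw [← hFcard]
    calc F.card ≤ (A ×ˢ B).card := Finset.card_le_card hFsub
    _ = A.card * B.card := Finset.card_product A B
  refine ⟨by omega, ?_⟩
  by_cases hab : A.card = B.card
  · -- strict: F ≠ A ×ˢ B
    have hstrict : G.edgeFinset.card < A.card * B.card := by
      rcases lt_or_eq_of_le hle with h | h
      · exact h
      exfalso
      have hFeq : F = A ×ˢ B := by
        apply Finset.eq_of_subset_of_card_le hFsub
        rw [hFcard, h, Finset.card_product]
      have hApos : 0 < A.card := by omega
      obtain ⟨a₀, ha₀⟩ := Finset.card_pos.mp hApos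
      have hBpos : 0 < B.card := by omega
      obtain ⟨b₀, hb₀⟩ := Finset.card_pos.mp hBpos
      have hadjall : ∀ a ∈ A, ∀ b ∈ B, G.Adj a b := by
        intro a ha b hb
        have : (a, b) ∈ F := by rw [hFeq]; exact Finset.mem_product.mpr ⟨ha, hb⟩
        simp only [hF, Finset.mem_filter] at this
        exact this.2.1
      have hNb : G.neighborSet b₀ = ↑A := by
        ext x
        simp only [SimpleGraph.mem_neighborSet, Finset.coe_filter, hA, Set.mem_setOf_eq,
          Finset.mem_univ, true_and]
        constructor
        · intro hx
          have hb₀odd : ¬ Even (deg G b₀) := by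
            simp only [hB, Finset.mem_filter] at hb₀; exact hb₀.2
          exact (si_parity hSI hx.symm).mpr hb₀odd
        · intro hx
          exact (hadjall x (by simp [hA, hx]) b₀ hb₀).symm
      have hNa : G.neighborSet a₀ = ↑B := by
        ext x
        simp only [SimpleGraph.mem_neighborSet, Finset.coe_filter, hB, Set.mem_setOf_eq,
          Finset.mem_univ, true_and]
        constructor
        · intro hx
          have ha₀e : Even (deg G a₀) := by
            simp only [hA, Finset.mem_filter] at ha₀; exact ha₀.2
          exact (si_parity hSI hx).mp ha₀e
        · intro hx
          refine hadjall a₀ ha₀ x ?_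
          simp only [hB, Finset.mem_filter, Finset.mem_univ, true_and]
          exact hx
      have hdb : deg G b₀ = A.card := by
        rw [deg, hNb, Set.ncard_coe_finset]
      have hda : deg G a₀ = B.card := by
        rw [deg, hNa, Set.ncard_coe_finset]
      have := hSI a₀ b₀ (hadjall a₀ ha₀ b₀ hb₀)
      rw [hda, hdb, hab] at this
      simp at this
    have h4 : (4 : ℤ) * A.card * B.card = n ^ 2 := by
      have : (A.card : ℤ) + B.card = n := by exact_mod_cast hAB
      have : (B.card : ℤ) = A.card := by exact_mod_cast hab.symm
      nlinarith [hAB, hab]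
    have : (G.edgeFinset.card : ℤ) < (A.card : ℤ) * B.card := by exact_mod_cast hstrict
    nlinarith [h4]
  · have h4 : 4 * (A.card : ℤ) * B.card ≤ n ^ 2 - 1 := by
      have h1 : (A.card : ℤ) + B.card = n := by exact_mod_cast hAB
      have h2 : ((A.card : ℤ) - B.card) ^ 2 ≥ 1 := by
        have : (A.card : ℤ) ≠ B.card := by exact_mod_cast hab
        have : (A.card : ℤ) - B.card ≠ 0 := by omega
        rcases this.lt_or_gt with h | h <;> nlinarith
      nlinarith
    have : (G.edgeFinset.card : ℤ) ≤ (A.card : ℤ) * B.card := by exact_mod_cast hle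
    nlinarith
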